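/- CES fails Strong Monotonicity even for independent distributions: Let D be the uniform distribution on the six points {1,2,3} × {1,2} in ℝ² (a product distribution), and define f₁(u, v) = √u + v and f₂(u, v) = u + v on the domain u ≥ 1, v ≥ 1. For all points of the domain, ∂f₂/∂u = 1 ≥ ∂f₁/∂u = 1/(2√u) ≥ 0. Yet for the explicand (2,2), ces_1((2,2), D, f₂) = 0 while ces_1((2,2), D, f₁) = (2√2 − 1 − √3)/3 > 0; i.e., strengthening the function's dependence on feature 1 strictly decreased the magnitude of its CES attribution. -/
import Mathlib


open scoped Classical

noncomputable def shapley {N : Type*} [Fintype N] [DecidableEq N]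
    (v : Finset N → ℝ) (i : N) : ℝ :=
  ∑ S ∈ (Finset.univ.erase i).powerset,
    ((S.card.factorial : ℝ) * ((Fintype.card N - S.card - 1).factorial) /
      (Fintype.card N).factorial) * (v (insert i S) - v S)


noncomputable def condExp {N : Type*} [Fintype N] [DecidableEq N]
    (T : Finset (N → ℝ)) (p : (N → ℝ) → ℝ) (f : (N → ℝ) → ℝ)
    (x : N → ℝ) (S : Finset N) : ℝ :=
  (∑ t ∈ T.filter fun t => ∀ j ∈ S, t j = x j, p t * f t) /
  (∑ t ∈ T.filter fun t => ∀ j ∈ S, t j = x j, p t)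

noncomputable def ces {N : Type*} [Fintype N] [DecidableEq N]
    (T : Finset (N → ℝ)) (p : (N → ℝ) → ℝ) (x : N → ℝ)
    (f : (N → ℝ) → ℝ) (i : N) : ℝ :=
  shapley (fun S => condExp T p f x S) i


lemma ces_eval (f : (Fin 2 → ℝ) → ℝ) :
    ces ({![1,1], ![2,1], ![3,1], ![1,2], ![2,2], ![3,2]} : Finset (Fin 2 → ℝ))
        (fun _ => (1 : ℝ) / 6) ![2,2] f 0 =
    (1/2) * ((f ![2,1] + f ![2,2])/2
        - (f ![1,1]+f ![2,1]+f ![3,1]+f ![1,2]+f ![2,2]+f ![3,2])/6)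
    + (1/2) * (f ![2,2] - (f ![1,2]+f ![2,2]+f ![3,2])/3) := by
  have huniv : (Finset.univ.erase (0 : Fin 2)).powerset = {∅, {1}} := by decide
  rw [ces, shapley, huniv]
  rw [Finset.sum_insert (by decide), Finset.sum_singleton]
  norm_num [condExp, Finset.filter_insert, Finset.sum_insert, Finset.mem_insert,
    funext_iff, Fin.forall_fin_two, Matrix.cons_val_zero, Matrix.cons_val_one,
    Matrix.head_cons, Finset.mem_singleton, Finset.filter_singleton]
  ring

/-- **CES fails Strong Monotonicity even for independent distributions**
(Table 4 of the paper): under the uniform distribution on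
`{1,2,3} × {1,2}` (a product distribution), with `f₁ (u,v) = √u + v` and
`f₂ (u,v) = u + v`, the partial derivative of `f₂` in the first feature
dominates that of `f₁` everywhere on the domain `u ≥ 1`, yet at explicand
`(2,2)` the first feature's CES attribution drops from
`(2√2 - 1 - √3)/3 > 0` for `f₁` to `0` for `f₂`. -/
theorem ces_fails_strong_monotonicity :
    (∀ u : ℝ, 1 ≤ u →
      0 ≤ 1 / (2 * Real.sqrt u) ∧ 1 / (2 * Real.sqrt u) ≤ 1) ∧
    ces ({![1,1], ![2,1], ![3,1], ![1,2], ![2,2], ![3,2]} : Finset (Fin 2 → ℝ))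
        (fun _ => (1 : ℝ) / 6)
        ![2,2] (fun t => t 0 + t 1) 0 = 0 ∧
    ces ({![1,1], ![2,1], ![3,1], ![1,2], ![2,2], ![3,2]} : Finset (Fin 2 → ℝ))
        (fun _ => (1 : ℝ) / 6)
        ![2,2] (fun t => Real.sqrt (t 0) + t 1) 0 =
      (2 * Real.sqrt 2 - 1 - Real.sqrt 3) / 3 ∧
    0 < (2 * Real.sqrt 2 - 1 - Real.sqrt 3) / 3 := by
  have h2 := Real.sq_sqrt (by norm_num : (2:ℝ) ≥ 0)
  have h3 := Real.sq_sqrt (by norm_num : (3:ℝ) ≥ 0)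
  have h2n := Real.sqrt_nonneg 2
  have h3n := Real.sqrt_nonneg 3
  refine ⟨fun u hu => ?_, ?_, ?_, ?_⟩
  · have h1 : (1:ℝ) ≤ Real.sqrt u := by
      rw [show (1:ℝ) = Real.sqrt 1 by simp]
      exact Real.sqrt_le_sqrt hu
    constructor
    · positivity
    · rw [div_le_one (by linarith)]; linarith
  · rw [ces_eval]
    norm_num [Matrix.cons_val_zero, Matrix.cons_val_one, Matrix.head_cons]
  · rw [ces_eval]
    norm_num [Matrix.cons_val_zero, Matrix.cons_val_one, Matrix.head_cons,
      Real.sqrt_one]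
    ring
  · have hb : Real.sqrt 3 < 2 := by nlinarith
    have : 2 * Real.sqrt 2 > 1 + Real.sqrt 3 := by nlinarith
    linarith
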